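/- Let θ: ℝ → ℝ be a measurable nonnegative weight function, let I : ℝ → ℝ be integrable, let n ≥ 2, and let t₁, …, tₙ ∈ ℝ. Define I_i(t) = I(t − t_i) for i = 1, …, n. Then the Gram matrix [ρ(I_i, I_j)]_{i,j=1}^{n} of the SpeD correlation is the n × n matrix of all ones, and consequently there exist coefficients c₁, …, cₙ ∈ ℝ, not all zero, with ∑_{i=1}^{n} ∑_{j=1}^{n} c_i c_j ρ(I_i, I_j) = 0; i.e., the SpeD correlation function is not strictly positive-definite. -/

import Mathlib

open MeasureTheory Real

/-- The Fourier transform of a real-valued function `I : ℝ → ℝ`,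
`Î(ξ) = ∫ I(t) e^{−2πi t ξ} dt`. -/
noncomputable def fourierOfReal (I : ℝ → ℝ) : ℝ → ℂ :=
  FourierTransform.fourier (fun t => (I t : ℂ))

/-- The SpeD correlation of two real integrable functions,
`ρ(I₁, I₂) = exp(−∫ θ(ξ)(|Î₁(ξ)| − |Î₂(ξ)|)² dξ)`. -/
noncomputable def speDCorr (θ : ℝ → ℝ) (I₁ I₂ : ℝ → ℝ) : ℝ :=
  Real.exp (-∫ ξ, θ ξ *
    (‖fourierOfReal I₁ ξ‖ - ‖fourierOfReal I₂ ξ‖) ^ 2)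

lemma abs_fourierOfReal_shift (I : ℝ → ℝ) (a ξ : ℝ) :
    ‖fourierOfReal (fun s => I (s - a)) ξ‖ =
      ‖fourierOfReal I ξ‖ := by
  have h : (fun t : ℝ => ((I (t - a)) : ℂ)) = (fun t : ℝ => (I t : ℂ)) ∘ (fun v => v + (-a)) := by
    ext t; simp [sub_eq_add_neg]
  unfold fourierOfReal
  rw [h]
  show ‖VectorFourier.fourierIntegral Real.fourierChar volume (innerₗ ℝ) _ ξ‖ =
    ‖VectorFourier.fourierIntegral Real.fourierChar volume (innerₗ ℝ) _ ξ‖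
  rw [VectorFourier.fourierIntegral_comp_add_right]
  simp [norm_smul]

/-- For translated copies `I_i(t) = I(t − t_i)` of a single integrable function, the Gram
matrix of the SpeD correlation is the matrix of all ones, and consequently there exist
coefficients `c`, not all zero, with `∑ᵢ∑ⱼ cᵢ cⱼ ρ(I_i, I_j) = 0`: the SpeD correlation is
not strictly positive-definite. -/
theorem speD_not_strictly_positive_definite
    (θ : ℝ → ℝ) (hθ_meas : Measurable θ) (hθ_nonneg : ∀ ξ, 0 ≤ θ ξ)
    (I : ℝ → ℝ) (hI : Integrable I) (n : ℕ) (hn : 2 ≤ n) (t : Fin n → ℝ) :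
    (∀ i j, speDCorr θ (fun s => I (s - t i)) (fun s => I (s - t j)) = 1) ∧
      ∃ c : Fin n → ℝ, c ≠ 0 ∧
        ∑ i, ∑ j, c i * c j *
          speDCorr θ (fun s => I (s - t i)) (fun s => I (s - t j)) = 0 := by
  have key : ∀ i j, speDCorr θ (fun s => I (s - t i)) (fun s => I (s - t j)) = 1 := by
    intro i j
    unfold speDCorr
    have : ∀ ξ, θ ξ * (‖fourierOfReal (fun s => I (s - t i)) ξ‖ -
        ‖fourierOfReal (fun s => I (s - t j)) ξ‖) ^ 2 = 0 := by
      intro ξ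
      rw [abs_fourierOfReal_shift, abs_fourierOfReal_shift]
      simp
    simp [this]
  refine ⟨key, ?_⟩
  have h0 : (0 : ℕ) < n := by omega
  have h1 : (1 : ℕ) < n := by omega
  set a : Fin n := ⟨0, h0⟩
  set b : Fin n := ⟨1, h1⟩
  have hab : a ≠ b := by simp [a, b, Fin.ext_iff]
  refine ⟨Pi.single a 1 - Pi.single b 1, ?_, ?_⟩
  · intro h
    have := congrFun h a
    simp [Pi.single_apply, hab] at this
  · have hsum : ∑ i, (Pi.single a 1 - Pi.single b 1 : Fin n → ℝ) i = 0 := by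
      simp [Finset.sum_sub_distrib, Finset.sum_pi_single]
    calc ∑ i, ∑ j, (Pi.single a 1 - Pi.single b 1 : Fin n → ℝ) i *
            (Pi.single a 1 - Pi.single b 1 : Fin n → ℝ) j *
            speDCorr θ (fun s => I (s - t i)) (fun s => I (s - t j))
        = (∑ i, (Pi.single a 1 - Pi.single b 1 : Fin n → ℝ) i) *
          (∑ j, (Pi.single a 1 - Pi.single b 1 : Fin n → ℝ) j) := by
          rw [Finset.sum_mul_sum]
          refine Finset.sum_congr rfl fun i _ => Finset.sum_congr rfl fun j _ => ?_
          rw [key i j, mul_one]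
      _ = 0 := by rw [hsum, mul_zero]
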